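/- For every natural number n and all x, z ∈ F: Σ_{i=0}^n (-1)^i [n choose i]_q q^{i(i-1)/2} a_i [1,-z,-x]^{n-i} = (-1)^n Σ_{j=0}^n [n choose j]_q x^j A*_{n-j}(z). In other words, A_n([1,-z,-x]) = (-1)^n Σ_{j=0}^n [n choose j]_q x^j A*_{n-j}(z). -/

import Mathlib

open Finset

/-- The q-Pochhammer symbol `(a;q)_n = ∏_{j=0}^{n-1} (1 - a q^j)`. -/
def qPoch {F : Type*} [Field F] (q a : F) (n : ℕ) : F :=
  ∏ j ∈ Finset.range n, (1 - a * q ^ j)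

/-- The q-binomial coefficient `[n choose i]_q`, equal to 0 when `i > n`. -/
def qBinom {F : Type*} [Field F] (q : F) (n i : ℕ) : F :=
  if i ≤ n then qPoch q q n / (qPoch q q i * qPoch q q (n - i)) else 0

/-- The q-integer `[n]_q = (1-q^n)/(1-q)`. -/
def qInt {F : Type*} [Field F] (q : F) (n : ℕ) : F := (1 - q ^ n) / (1 - q)

/-- The q-dual sequence `a*_n = ∑_{i=0}^n (-1)^i [n choose i]_q q^{i(i-1)/2} a_i`. -/
def qDual {F : Type*} [Field F] (q : F) (a : ℕ → F) (n : ℕ) : F :=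
  ∑ i ∈ Finset.range (n + 1), (-1 : F) ^ i * qBinom q n i * q ^ (i.choose 2) * a i
/-- The q-factorial `[n]_q! = ∏_{j=1}^n [j]_q`. -/
def qFact {F : Type*} [Field F] (q : F) (n : ℕ) : F :=
  ∏ j ∈ Finset.range n, qInt q (j + 1)

/-- `[u,v,w]^n = ∑_{i+j+k=n} ([n]_q!/([i]_q![j]_q![k]_q!)) u^i v^j w^k`. -/
def qBracket3 {F : Type*} [Field F] (q : F) (n : ℕ) (u v w : F) : F :=
  ∑ i ∈ Finset.range (n + 1), ∑ j ∈ Finset.range (n + 1 - i),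
    qFact q n / (qFact q i * qFact q j * qFact q (n - i - j)) *
      (u ^ i * v ^ j * w ^ (n - i - j))

/-- `A_n(x) = ∑_{i=0}^n (-1)^i [n choose i]_q q^{i(i-1)/2} a_i x^{n-i}`. -/
def Apoly {F : Type*} [Field F] (q : F) (a : ℕ → F) (n : ℕ) (x : F) : F :=
  ∑ i ∈ Finset.range (n + 1), (-1 : F) ^ i * qBinom q n i * q ^ (i.choose 2) * a i * x ^ (n - i)

/-- `A*_n(x) = ∑_{i=0}^n (-1)^i [n choose i]_q a*_i x^{n-i}`. -/
def AstarPoly {F : Type*} [Field F] (q : F) (a : ℕ → F) (n : ℕ) (x : F) : F :=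
  ∑ i ∈ Finset.range (n + 1), (-1 : F) ^ i * qBinom q n i * qDual q a i * x ^ (n - i)

/-- `A_n([1,-z,-x]) = ∑_{i=0}^n (-1)^i [n choose i]_q q^{i(i-1)/2} a_i [1,-z,-x]^{n-i}`. -/
def ApolyTri {F : Type*} [Field F] (q : F) (a : ℕ → F) (n : ℕ) (z x : F) : F :=
  ∑ i ∈ Finset.range (n + 1), (-1 : F) ^ i * qBinom q n i * q ^ (i.choose 2) * a i *
    qBracket3 q (n - i) 1 (-z) (-x)

section Helpers
open Finset
variable {F : Type*} [Field F] {q : F}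

lemma one_sub_pow_ne (hq : ∀ m : ℕ, 0 < m → q ^ m ≠ 1) {m : ℕ} (hm : 0 < m) :
    (1 : F) - q ^ m ≠ 0 := fun h => hq m hm (by linear_combination -h)

lemma qPoch_eq_fact (n : ℕ) : qPoch q q n = (1 - q) ^ n * qFact q n := by
  rw [qPoch, qFact]
  have h : ∀ j ∈ Finset.range n, (1 - q * q ^ j) = (1 - q) * qInt q (j + 1) := by
    intro j _
    rw [qInt, pow_succ]
    by_cases h : (1 : F) - q = 0
    · have : q = 1 := by linear_combination -h
      simp [this]
    · field_simp
  rw [Finset.prod_congr rfl h, Finset.prod_mul_distrib, Finset.prod_const, Finset.card_range]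

lemma qPoch_ne_zero (hq : ∀ m : ℕ, 0 < m → q ^ m ≠ 1) (n : ℕ) : qPoch q q n ≠ 0 := by
  rw [qPoch]
  refine Finset.prod_ne_zero_iff.mpr fun j _ => ?_
  have := one_sub_pow_ne hq (Nat.succ_pos j)
  rwa [pow_succ, mul_comm] at this

lemma one_sub_q_ne (hq : ∀ m : ℕ, 0 < m → q ^ m ≠ 1) : (1 : F) - q ≠ 0 := by
  have := one_sub_pow_ne hq Nat.one_pos; simpa using this

lemma qFact_ne_zero (hq : ∀ m : ℕ, 0 < m → q ^ m ≠ 1) (n : ℕ) : qFact q n ≠ 0 := by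
  have h := qPoch_ne_zero hq n
  rw [qPoch_eq_fact] at h
  exact fun hf => h (by rw [hf, mul_zero])

lemma qBinom_eq (hq : ∀ m : ℕ, 0 < m → q ^ m ≠ 1) {n i : ℕ} (h : i ≤ n) :
    qBinom q n i = qFact q n / (qFact q i * qFact q (n - i)) := by
  rw [qBinom, if_pos h, qPoch_eq_fact, qPoch_eq_fact, qPoch_eq_fact]
  have h1 : (1 : F) - q ≠ 0 := one_sub_q_ne hq
  have h2 := qFact_ne_zero hq i
  have h3 := qFact_ne_zero hq (n - i)
  have hpow : (1 - q) ^ i * (1 - q) ^ (n - i) = (1 - q) ^ n := by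
    rw [← pow_add]; congr 1; omega
  rw [← hpow]
  field_simp

lemma qBinom_zero {n i : ℕ} (h : n < i) : qBinom q n i = 0 := by
  rw [qBinom, if_neg (by omega)]

lemma npow_par (a b : ℕ) (h : a % 2 = b % 2) : (-1 : F) ^ a = (-1) ^ b := by
  conv_lhs => rw [← Nat.div_add_mod a 2]
  conv_rhs => rw [← Nat.div_add_mod b 2]
  rw [pow_add, pow_add, pow_mul, pow_mul, neg_one_sq, one_pow, h]
  simp

lemma sum_shrink {M : Type*} [AddCommMonoid M] {N m : ℕ} (hm : m ≤ N) (g : ℕ → M)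
    (hz : ∀ e, m < e → e ≤ N → g e = 0) :
    ∑ e ∈ Finset.range (N + 1), g e = ∑ e ∈ Finset.range (m + 1), g e := by
  refine (Finset.sum_subset (Finset.range_subset_range.mpr (by omega)) fun e he hne => ?_).symm
  rw [Finset.mem_range] at he hne
  exact hz e (by omega) (by omega)

lemma trinom_fact (hq : ∀ m : ℕ, 0 < m → q ^ m ≠ 1) {m e p : ℕ} (h : e + p ≤ m) :
    qBinom q m e * qBinom q (m - e) p =
      qFact q m / (qFact q e * qFact q p * qFact q (m - e - p)) := by
  rw [qBinom_eq hq (show e ≤ m by omega), qBinom_eq hq (show p ≤ m - e by omega)]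
  have h1 := qFact_ne_zero hq (m - e)
  have h2 := qFact_ne_zero hq e
  have h3 := qFact_ne_zero hq p
  have h4 := qFact_ne_zero hq (m - e - p)
  field_simp

lemma key_trinom (hq : ∀ m : ℕ, 0 < m → q ^ m ≠ 1) {n i e p j : ℕ} (h : i + e + p + j = n) :
    qBinom q n i * qBinom q (n - i) e * qBinom q (n - i - e) p =
    qBinom q n j * qBinom q (n - j) (i + e) * qBinom q (i + e) i := by
  rw [qBinom_eq hq (show i ≤ n by omega), qBinom_eq hq (show e ≤ n - i by omega),
      qBinom_eq hq (show p ≤ n - i - e by omega), qBinom_eq hq (show j ≤ n by omega),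
      qBinom_eq hq (show i + e ≤ n - j by omega), qBinom_eq hq (show i ≤ i + e by omega)]
  rw [show n - i - e - p = j from by omega, show n - j - (i + e) = p from by omega,
      show n - i - e = p + j from by omega, show n - i = e + p + j from by omega,
      show n - j = i + e + p from by omega, show i + e - i = e from by omega]
  have h1 := qFact_ne_zero hq i
  have h2 := qFact_ne_zero hq e
  have h3 := qFact_ne_zero hq p
  have h4 := qFact_ne_zero hq j
  have h5 := qFact_ne_zero hq (e + p + j)
  have h6 := qFact_ne_zero hq (p + j)
  have h7 := qFact_ne_zero hq (i + e + p)
  have h8 := qFact_ne_zero hq (i + e)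
  field_simp

end Helpers

/-- Summand for the expansion of the left-hand side. -/
def fF {F : Type*} [Field F] (q : F) (a : ℕ → F) (n : ℕ) (z x : F) : ℕ × ℕ × ℕ → F :=
  fun t => (-1 : F) ^ (n + t.2.1) * qBinom q n t.1 * qBinom q (n - t.1) t.2.1 *
    qBinom q (n - t.1 - t.2.1) t.2.2 * q ^ (t.1.choose 2) * a t.1 * z ^ t.2.2 *
    x ^ (n - t.1 - t.2.1 - t.2.2)

/-- Summand for the expansion of the right-hand side. -/
def gF {F : Type*} [Field F] (q : F) (a : ℕ → F) (n : ℕ) (z x : F) : ℕ × ℕ × ℕ → F :=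
  fun t => (-1 : F) ^ (n + t.2.1 + t.2.2) * qBinom q n t.1 * qBinom q (n - t.1) t.2.1 *
    qBinom q t.2.1 t.2.2 * q ^ (t.2.2.choose 2) * a t.2.2 * z ^ (n - t.1 - t.2.1) * x ^ t.1

theorem stmt15 {F : Type*} [Field F] (q : F) (hq0 : q ≠ 0)
    (hq : ∀ m : ℕ, 0 < m → q ^ m ≠ 1) (a : ℕ → F) (n : ℕ) (x z : F) :
    ∑ i ∈ Finset.range (n + 1), (-1 : F) ^ i * qBinom q n i * q ^ (i.choose 2) *
        a i * qBracket3 q (n - i) 1 (-z) (-x) =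
    (-1 : F) ^ n * ∑ j ∈ Finset.range (n + 1), qBinom q n j * x ^ j *
        AstarPoly q a (n - j) z := by
  classical
  have hA : ∀ i ∈ Finset.range (n + 1),
      (-1 : F) ^ i * qBinom q n i * q ^ (i.choose 2) * a i * qBracket3 q (n - i) 1 (-z) (-x)
      = ∑ e ∈ Finset.range (n + 1), ∑ p ∈ Finset.range (n + 1), fF q a n z x (i, e, p) := by
    intro i hi
    rw [Finset.mem_range] at hi
    have hi' : i ≤ n := by omega
    have hz1 : ∀ e, n - i < e → e ≤ n →
        (∑ p ∈ Finset.range (n + 1), fF q a n z x (i, e, p)) = 0 := by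
      intro e he _
      exact Finset.sum_eq_zero fun p _ => by simp [fF, qBinom_zero he]
    rw [sum_shrink (Nat.sub_le n i) _ hz1, qBracket3, Finset.mul_sum]
    refine Finset.sum_congr rfl fun e he => ?_
    rw [Finset.mem_range] at he
    have he' : e ≤ n - i := by omega
    have hz2 : ∀ p, n - i - e < p → p ≤ n → fF q a n z x (i, e, p) = 0 := by
      intro p hp _
      simp [fF, qBinom_zero hp]
    rw [sum_shrink (show n - i - e ≤ n by omega) _ hz2,
        show n - i + 1 - e = (n - i - e) + 1 from by omega, Finset.mul_sum]
    refine Finset.sum_congr rfl fun p hp => ?_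
    rw [Finset.mem_range] at hp
    have hp' : p ≤ n - i - e := by omega
    rw [← trinom_fact hq (show e + p ≤ n - i by omega)]
    simp only [fF]
    rw [one_pow, neg_pow, neg_pow]
    have hsgn : (-1 : F) ^ (n + e) = (-1) ^ i * (-1) ^ p * (-1) ^ (n - i - e - p) := by
      rw [← pow_add, ← pow_add]
      exact npow_par _ _ (by omega)
    rw [hsgn]
    ring
  have hB : ∀ j ∈ Finset.range (n + 1),
      (-1 : F) ^ n * (qBinom q n j * x ^ j * AstarPoly q a (n - j) z)
      = ∑ k ∈ Finset.range (n + 1), ∑ i2 ∈ Finset.range (n + 1), gF q a n z x (j, k, i2) := by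
    intro j hj
    rw [Finset.mem_range] at hj
    have hj' : j ≤ n := by omega
    have hzk : ∀ k, n - j < k → k ≤ n →
        (∑ i2 ∈ Finset.range (n + 1), gF q a n z x (j, k, i2)) = 0 := by
      intro k hk _
      exact Finset.sum_eq_zero fun i2 _ => by simp [gF, qBinom_zero hk]
    rw [sum_shrink (Nat.sub_le n j) _ hzk, AstarPoly]
    simp only [qDual, Finset.mul_sum, Finset.sum_mul]
    refine Finset.sum_congr rfl fun k hk => ?_
    rw [Finset.mem_range] at hk
    have hk' : k ≤ n - j := by omega
    have hzi : ∀ i2, k < i2 → i2 ≤ n → gF q a n z x (j, k, i2) = 0 := by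
      intro i2 hi2 _
      simp [gF, qBinom_zero hi2]
    rw [sum_shrink (show k ≤ n by omega) _ hzi]
    refine Finset.sum_congr rfl fun i2 hi2 => ?_
    simp only [gF]
    have hsgn : (-1 : F) ^ (n + k + i2) = (-1) ^ n * (-1) ^ k * (-1) ^ i2 := by
      rw [pow_add, pow_add]
    rw [hsgn]
    ring
  rw [Finset.mul_sum, Finset.sum_congr rfl hA, Finset.sum_congr rfl hB]
  have hbox : ∀ (h : ℕ × ℕ × ℕ → F),
      (∑ i ∈ Finset.range (n + 1), ∑ e ∈ Finset.range (n + 1),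
        ∑ p ∈ Finset.range (n + 1), h (i, e, p))
      = ∑ t ∈ (Finset.range (n + 1)) ×ˢ (Finset.range (n + 1)) ×ˢ (Finset.range (n + 1)), h t := by
    intro h
    rw [Finset.sum_product]
    exact Finset.sum_congr rfl fun i _ => by rw [Finset.sum_product]
  rw [hbox, hbox]
  set box := (Finset.range (n + 1)) ×ˢ (Finset.range (n + 1)) ×ˢ (Finset.range (n + 1)) with hboxdef
  have hf0 : ∀ t ∈ box, fF q a n z x t ≠ 0 → t.1 + t.2.1 + t.2.2 ≤ n := by
    rintro ⟨i, e, p⟩ ht hne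
    simp only [hboxdef, Finset.mem_product, Finset.mem_range] at ht
    by_contra hgt
    have hgt' : ¬ (i + e + p ≤ n) := by simpa using hgt
    rcases le_or_gt e (n - i) with h | h
    · exact hne (by simp [fF, qBinom_zero (show n - i - e < p by omega)])
    · exact hne (by simp [fF, qBinom_zero h])
  have hg0 : ∀ t ∈ box, gF q a n z x t ≠ 0 → t.1 + t.2.1 ≤ n ∧ t.2.2 ≤ t.2.1 := by
    rintro ⟨j, k, i⟩ ht hne
    simp only [hboxdef, Finset.mem_product, Finset.mem_range] at ht
    by_contra hgt
    have hgt' : ¬ (j + k ≤ n ∧ i ≤ k) := by simpa using hgt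
    rw [not_and_or] at hgt'
    rcases hgt' with h | h
    · exact hne (by simp [gF, qBinom_zero (show n - j < k by omega)])
    · exact hne (by simp [gF, qBinom_zero (show k < i by omega)])
  rw [← Finset.sum_filter_of_ne hf0, ← Finset.sum_filter_of_ne hg0]
  refine Finset.sum_nbij'
    (fun t => (n - t.1 - t.2.1 - t.2.2, t.1 + t.2.1, t.1))
    (fun t => (t.2.2, t.2.1 - t.2.2, n - t.1 - t.2.1)) ?_ ?_ ?_ ?_ ?_
  · rintro ⟨i, e, p⟩ ht
    simp only [hboxdef, Finset.mem_filter, Finset.mem_product, Finset.mem_range] at ht ⊢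
    omega
  · rintro ⟨j, k, i⟩ ht
    simp only [hboxdef, Finset.mem_filter, Finset.mem_product, Finset.mem_range] at ht ⊢
    omega
  · rintro ⟨i, e, p⟩ ht
    simp [hboxdef] at ht
    simp only [Prod.mk.injEq, and_true, true_and, eq_self_iff_true]
    omega
  · rintro ⟨j, k, i⟩ ht
    simp [hboxdef] at ht
    simp only [Prod.mk.injEq, and_true, true_and, eq_self_iff_true]
    omega
  · rintro ⟨i, e, p⟩ ht
    simp only [hboxdef, Finset.mem_filter, Finset.mem_product, Finset.mem_range] at ht
    simp only [fF, gF]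
    rw [show n - (n - i - e - p) - (i + e) = p from by omega,
        npow_par (n + (i + e) + i) (n + e) (by omega)]
    have h3 := key_trinom hq (n := n) (i := i) (e := e) (p := p) (j := n - i - e - p) (by omega)
    linear_combination ((-1 : F) ^ (n + e) * q ^ (i.choose 2) * a i * z ^ p *
      x ^ (n - i - e - p)) * h3
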